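/- Let F be a field with char F ≠ 2, 3, and let A be the 2-dimensional algebra with products e1·e1 = α1·e1 + e2, e1·e2 = (2α1−1)·e2, e2·e1 = (1−α1)·e2, e2·e2 = 0, where α1 ∈ F. Then the automorphism group of A consists exactly of the maps e1 ↦ e1 + c·e2, e2 ↦ e2 for c ∈ F; in particular it is isomorphic to the additive group of F. -/

import Mathlib

/-- Bilinear multiplication on `Fin 2 → F` determined by the four products
`e1·e1 = p11`, `e1·e2 = p12`, `e2·e1 = p21`, `e2·e2 = p22` of basis vectors. -/
def mul2 {F : Type*} [Field F] (p11 p12 p21 p22 : Fin 2 → F) (u v : Fin 2 → F) : Fin 2 → F :=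
  (u 0 * v 0) • p11 + (u 0 * v 1) • p12 + (u 1 * v 0) • p21 + (u 1 * v 1) • p22

theorem stmt4 {F : Type*} [Field F] (h2 : (2 : F) ≠ 0) (h3 : (3 : F) ≠ 0) (α1 : F)
    (mul : (Fin 2 → F) → (Fin 2 → F) → (Fin 2 → F))
    (hmul : mul = mul2 ![α1, 1] ![0, 2 * α1 - 1] ![0, 1 - α1] ![0, 0]) :
    ∀ f : (Fin 2 → F) ≃ₗ[F] (Fin 2 → F), (∀ u v, f (mul u v) = mul (f u) (f v)) ↔ (∃ c : F, f ![1, 0] = ![1, c] ∧ f ![0, 1] = ![0, 1]) := by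
  subst hmul
  intro f
  constructor
  · intro h
    -- decompose basis products
    have k1 : mul2 ![α1, 1] ![0, 2 * α1 - 1] ![0, 1 - α1] ![0, 0]
        (![1, 0] : Fin 2 → F) ![1, 0] = α1 • ![(1:F), 0] + ![0, 1] := by
      funext i; fin_cases i <;> simp [mul2] <;> ring
    have k4 : mul2 ![α1, 1] ![0, 2 * α1 - 1] ![0, 1 - α1] ![0, 0]
        (![0, 1] : Fin 2 → F) ![0, 1] = 0 := by
      funext i; fin_cases i <;> simp [mul2]
    have k2 : mul2 ![α1, 1] ![0, 2 * α1 - 1] ![0, 1 - α1] ![0, 0]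
        (![1, 0] : Fin 2 → F) ![0, 1] = (2 * α1 - 1) • ![(0:F), 1] := by
      funext i; fin_cases i <;> simp [mul2]
    have k3 : mul2 ![α1, 1] ![0, 2 * α1 - 1] ![0, 1 - α1] ![0, 0]
        (![0, 1] : Fin 2 → F) ![1, 0] = (1 - α1) • ![(0:F), 1] := by
      funext i; fin_cases i <;> simp [mul2]
    have h11 := h ![1, 0] ![1, 0]
    have h22 := h ![0, 1] ![0, 1]
    have h12 := h ![1, 0] ![0, 1]
    have h21 := h ![0, 1] ![1, 0]
    rw [k1] at h11; rw [k4] at h22; rw [k2] at h12; rw [k3] at h21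
    simp only [map_add, map_smul, map_zero] at h11 h22 h12 h21
    -- component equations
    have E0 := congr_fun h11 0
    have E1 := congr_fun h11 1
    have G0 := congr_fun h22 0
    have G1 := congr_fun h22 1
    have H1 := congr_fun h12 1
    have I1 := congr_fun h21 1
    simp only [mul2, Pi.add_apply, Pi.smul_apply, smul_eq_mul,
      Matrix.cons_val_zero, Matrix.cons_val_one, Matrix.head_cons, Pi.zero_apply] at E0 E1 G0 G1 H1 I1
    set a := f ![1, 0] 0 with ha
    set b := f ![1, 0] 1 with hb
    set p := f ![0, 1] 0 with hp
    set q := f ![0, 1] 1 with hq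
    -- q ≠ 0 will follow once p = 0
    have hpz : p = 0 := by
      have hpp : p * p = 0 := by
        rcases eq_or_ne α1 0 with h0 | h0
        · rw [h0] at G1; linear_combination -G1
        · have h' : p * p * α1 = 0 := by linear_combination -G0
          exact (mul_eq_zero.mp h').resolve_right h0
      exact mul_self_eq_zero.mp hpp
    have hqz : q ≠ 0 := by
      intro hq0
      have : f ![0, 1] = 0 := by
        funext i; fin_cases i
        · simpa using hpz
        · simpa using hq0
      have := f.injective (this.trans (map_zero f).symm)
      have := congr_fun this 1
      simp at this
    have haz : a = 1 := by
      by_contra hane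
      have e12 : (2 * α1 - 1) * (1 - a) = 0 := by
        have hh : (2 * α1 - 1) * (1 - a) * q = 0 := by
          linear_combination H1 + (a + b * (1 - α1)) * hpz
        exact (mul_eq_zero.mp hh).resolve_right hqz
      have e21 : (1 - α1) * (1 - a) = 0 := by
        have hh : (1 - α1) * (1 - a) * q = 0 := by
          linear_combination I1 + (a + b * (2 * α1 - 1)) * hpz
        exact (mul_eq_zero.mp hh).resolve_right hqz
      have h1a : (1 : F) - a ≠ 0 := sub_ne_zero.mpr (fun hh => hane hh.symm)
      have e12' : 2 * α1 - 1 = 0 := by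
        rcases mul_eq_zero.mp e12 with h' | h'
        · exact h'
        · exact absurd h' h1a
      have e21' : 1 - α1 = 0 := by
        rcases mul_eq_zero.mp e21 with h' | h'
        · exact h'
        · exact absurd h' h1a
      have hone : (1 : F) = 0 := by linear_combination 2 * e21' + e12'
      exact one_ne_zero hone
    have hq1 : q = 1 := by
      rw [haz] at E1; linear_combination E1
    refine ⟨b, ?_, ?_⟩
    · funext i; fin_cases i
      · simpa using haz
      · simpa using hb.symm
    · funext i; fin_cases i
      · simpa using hpz
      · simpa using hq1
  · rintro ⟨c, h1, h2⟩ u v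
    have key : ∀ w : Fin 2 → F, f w = ![w 0, c * w 0 + w 1] := by
      intro w
      have hw : w = w 0 • ![(1:F), 0] + w 1 • ![0, 1] := by
        funext i; fin_cases i <;> simp
      rw [hw, map_add, map_smul, map_smul, h1, h2]
      funext i; fin_cases i <;> simp <;> ring
    rw [key u, key v, key (mul2 ![α1, 1] ![0, 2 * α1 - 1] ![0, 1 - α1] ![0, 0] u v)]
    funext i; fin_cases i <;> simp [mul2] <;> ring
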